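/- Let s > 0, let φ₁ : ℝ → ℝ be measurable, and let φ₂ ∈ L²(ℝ;ℂ) ∩ L^∞(ℝ;ℂ). Then the function x ↦ e^{iφ₁(x)} φ₂(x) satisfies [e^{iφ₁} φ₂]_{s,2} ≤ ‖φ₂‖_{L^∞} · [φ₁]_{s,2} + [φ₂]_{s,2}. -/

import Mathlib

open MeasureTheory Complex ENNReal

/-- The Besov-type seminorm
`[f]_{s,p} = (∫₀^∞ t^{−1−2s} (sup_{|y|≤t} ‖f(·−y) − f‖_{L^p})² dt)^{1/2} ∈ [0,∞]`. -/
noncomputable def besovSeminorm {E : Type*} [NormedAddCommGroup E]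
    (s : ℝ) (p : ℝ≥0∞) (f : ℝ → E) : ℝ≥0∞ :=
  (∫⁻ t in Set.Ioi (0:ℝ),
      ENNReal.ofReal (t ^ (-1 - 2*s)) *
        (⨆ (y : ℝ) (_ : |y| ≤ t), eLpNorm (fun x => f (x - y) - f x) p volume) ^ 2)
    ^ ((1:ℝ)/2)

lemma lip_exp_I : LipschitzWith 1 (fun r : ℝ => Complex.exp (Complex.I * r)) := by
  have hd : ∀ r : ℝ, HasDerivAt (fun r : ℝ => Complex.exp (Complex.I * r))
      (Complex.I * Complex.exp (Complex.I * r)) r := by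
    intro r
    have h1 : HasDerivAt (fun z : ℂ => Complex.exp (Complex.I * z))
        (Complex.I * Complex.exp (Complex.I * r)) (r : ℂ) := by
      simpa [mul_comm] using ((hasDerivAt_id (r:ℂ)).const_mul Complex.I).cexp
    exact h1.comp_ofReal
  apply lipschitzWith_of_nnnorm_deriv_le (fun r => (hd r).differentiableAt)
  intro x
  rw [(hd x).deriv]
  simp [← NNReal.coe_le_coe, Complex.norm_exp]

lemma exp_I_sub_le (a b : ℝ) :
    ‖Complex.exp (Complex.I * a) - Complex.exp (Complex.I * b)‖ ≤ |a - b| := by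
  simpa [Real.dist_eq, dist_eq_norm] using (lip_exp_I.dist_le_mul a b)

lemma step_eLpNorm (φ₁ : ℝ → ℝ) (hφ₁ : Measurable φ₁) (φ₂ : ℝ → ℂ)
    (h2m : AEStronglyMeasurable φ₂ volume) (y : ℝ) :
    eLpNorm (fun x => Complex.exp (Complex.I * (↑(φ₁ (x - y)):ℂ)) * φ₂ (x - y)
        - Complex.exp (Complex.I * (↑(φ₁ x):ℂ)) * φ₂ x) 2 volume
      ≤ eLpNorm φ₂ ⊤ volume * eLpNorm (fun x => φ₁ (x - y) - φ₁ x) 2 volume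
        + eLpNorm (fun x => φ₂ (x - y) - φ₂ x) 2 volume := by
  have hmp : MeasurePreserving (fun x : ℝ => x - y) volume volume :=
    measurePreserving_sub_right volume y
  have h2y : AEStronglyMeasurable (fun x => φ₂ (x - y)) volume :=
    h2m.comp_quasiMeasurePreserving hmp.quasiMeasurePreserving
  have hexp : ∀ z : ℝ → ℝ, Measurable z →
      Measurable fun x => Complex.exp (Complex.I * (↑(z x):ℂ)) := fun z hz =>
    Complex.measurable_exp.comp ((Complex.measurable_ofReal.comp hz).const_mul Complex.I)
  have hφ₁y : Measurable fun x => φ₁ (x - y) := hφ₁.comp (measurable_id.sub_const y)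
  set g₁ : ℝ → ℂ := fun x => Complex.exp (Complex.I * (↑(φ₁ (x - y)):ℂ)) * (φ₂ (x - y) - φ₂ x)
  set g₂ : ℝ → ℂ := fun x =>
    (Complex.exp (Complex.I * (↑(φ₁ (x - y)):ℂ)) - Complex.exp (Complex.I * (↑(φ₁ x):ℂ))) * φ₂ x
  have hg₁m : AEStronglyMeasurable g₁ volume :=
    ((hexp _ hφ₁y).aestronglyMeasurable).mul (h2y.sub h2m)
  have hg₂m : AEStronglyMeasurable g₂ volume :=
    (((hexp _ hφ₁y).sub (hexp _ hφ₁)).aestronglyMeasurable).mul h2m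
  have hfun : (fun x => Complex.exp (Complex.I * (↑(φ₁ (x - y)):ℂ)) * φ₂ (x - y)
        - Complex.exp (Complex.I * (↑(φ₁ x):ℂ)) * φ₂ x) = fun x => g₁ x + g₂ x := by
    funext x; simp only [g₁, g₂]; ring
  rw [hfun]
  have h₁ : eLpNorm g₁ 2 volume ≤ eLpNorm (fun x => φ₂ (x - y) - φ₂ x) 2 volume := by
    apply eLpNorm_mono
    intro x
    simp only [g₁, norm_mul]
    have : ‖Complex.exp (Complex.I * (↑(φ₁ (x - y)):ℂ))‖ = 1 := by
      simp [Complex.norm_exp]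
    rw [this, one_mul]
  have h₂ : eLpNorm g₂ 2 volume
      ≤ eLpNorm φ₂ ⊤ volume * eLpNorm (fun x => φ₁ (x - y) - φ₁ x) 2 volume := by
    have hb : eLpNorm (fun x => (φ₁ (x - y) - φ₁ x) • φ₂ x) 2 volume
        ≤ eLpNorm φ₂ ⊤ volume * eLpNorm (fun x => φ₁ (x - y) - φ₁ x) 2 volume := by
      have hb0 := eLpNorm_le_eLpNorm_top_mul_eLpNorm (μ := volume) 2 φ₂
        ((hφ₁y.sub hφ₁).aestronglyMeasurable) (fun e r => r • e) 1
        (by filter_upwards with x; rw [one_mul, nnnorm_smul, mul_comm])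
      rw [ENNReal.coe_one, one_mul] at hb0
      exact hb0
    refine le_trans (eLpNorm_mono fun x => ?_) hb
    simp only [g₂, norm_mul, norm_smul, Real.norm_eq_abs]
    exact mul_le_mul_of_nonneg_right (exp_I_sub_le (φ₁ (x - y)) (φ₁ x)) (norm_nonneg _)
  calc eLpNorm (fun x => g₁ x + g₂ x) 2 volume
      ≤ eLpNorm g₁ 2 volume + eLpNorm g₂ 2 volume :=
        eLpNorm_add_le hg₁m hg₂m (by norm_num)
    _ ≤ _ := by
        rw [add_comm]
        exact add_le_add h₂ h₁

/-- `[e^{iφ₁} φ₂]_{s,2} ≤ ‖φ₂‖_{L^∞} [φ₁]_{s,2} + [φ₂]_{s,2}`. -/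
theorem besov_exp_mul_bound (s : ℝ) (hs : 0 < s)
    (φ₁ : ℝ → ℝ) (hφ₁ : Measurable φ₁)
    (φ₂ : ℝ → ℂ) (h2 : MemLp φ₂ 2 volume) (hinf : MemLp φ₂ ⊤ volume) :
    besovSeminorm s 2 (fun x => Complex.exp (Complex.I * (↑(φ₁ x):ℂ)) * φ₂ x)
      ≤ eLpNorm φ₂ ⊤ volume * besovSeminorm s 2 φ₁ + besovSeminorm s 2 φ₂ := by
  set N := eLpNorm φ₂ ⊤ volume with hNdef
  have hN : N ≠ ⊤ := hinf.2.ne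
  set B : ℝ → ℝ≥0∞ :=
    fun t => ⨆ (y : ℝ) (_ : |y| ≤ t), eLpNorm (fun x => φ₁ (x - y) - φ₁ x) 2 volume with hBdef
  set A : ℝ → ℝ≥0∞ :=
    fun t => ⨆ (y : ℝ) (_ : |y| ≤ t), eLpNorm (fun x => φ₂ (x - y) - φ₂ x) 2 volume with hAdef
  set w : ℝ → ℝ≥0∞ := fun t => ENNReal.ofReal (t ^ (-1 - 2*s)) with hwdef
  have hBm : Measurable B :=
    Monotone.measurable (fun t₁ t₂ h => biSup_mono fun y hy => hy.trans h)
  have hAm : Measurable A :=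
    Monotone.measurable (fun t₁ t₂ h => biSup_mono fun y hy => hy.trans h)
  have hwm : Measurable w := by
    apply Measurable.ennreal_ofReal
    measurability
  set c : ℝ → ℝ≥0∞ := fun t => w t ^ ((1:ℝ)/2) with hcdef
  have hcm : Measurable c := by
    have : Measurable (fun x : ℝ≥0∞ => x ^ ((1:ℝ)/2)) := by measurability
    exact this.comp hwm
  have hr2 : ∀ a : ℝ≥0∞, a ^ 2 = a ^ (2:ℝ) := fun a => by
    rw [← ENNReal.rpow_natCast a 2]; norm_num
  have hc2 : ∀ t, c t ^ (2:ℝ) = w t := fun t => by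
    rw [hcdef, ← ENNReal.rpow_mul]; norm_num
  have hS : ∀ t : ℝ,
      (⨆ (y : ℝ) (_ : |y| ≤ t),
        eLpNorm (fun x => Complex.exp (Complex.I * (↑(φ₁ (x - y)):ℂ)) * φ₂ (x - y)
          - Complex.exp (Complex.I * (↑(φ₁ x):ℂ)) * φ₂ x) 2 volume)
        ≤ N * B t + A t := by
    intro t
    refine iSup₂_le fun y hy => ?_
    refine (step_eLpNorm φ₁ hφ₁ φ₂ h2.1 y).trans ?_
    refine add_le_add (mul_le_mul_right ?_ N) ?_
    · exact le_iSup₂ (f := fun y (_ : |y| ≤ t) =>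
        eLpNorm (fun x => φ₁ (x - y) - φ₁ x) 2 volume) y hy
    · exact le_iSup₂ (f := fun y (_ : |y| ≤ t) =>
        eLpNorm (fun x => φ₂ (x - y) - φ₂ x) 2 volume) y hy
  simp only [besovSeminorm]
  calc (∫⁻ t in Set.Ioi (0:ℝ), w t *
          (⨆ (y : ℝ) (_ : |y| ≤ t),
            eLpNorm (fun x => Complex.exp (Complex.I * (↑(φ₁ (x - y)):ℂ)) * φ₂ (x - y)
              - Complex.exp (Complex.I * (↑(φ₁ x):ℂ)) * φ₂ x) 2 volume) ^ 2) ^ ((1:ℝ)/2)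
      ≤ (∫⁻ t in Set.Ioi (0:ℝ), w t * (N * B t + A t) ^ 2) ^ ((1:ℝ)/2) := by
        refine ENNReal.rpow_le_rpow (lintegral_mono fun t => ?_) (by norm_num)
        exact mul_le_mul_right (pow_le_pow_left' (hS t) 2) _
    _ = (∫⁻ t in Set.Ioi (0:ℝ),
          ((fun t => c t * (N * B t)) + fun t => c t * A t) t ^ (2:ℝ)) ^ ((1:ℝ)/2) := by
        congr 1
        refine lintegral_congr fun t => ?_
        simp only [Pi.add_apply]
        rw [← mul_add, hr2, ENNReal.mul_rpow_of_nonneg _ _ (by norm_num : (0:ℝ) ≤ 2), hc2]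
    _ ≤ (∫⁻ t in Set.Ioi (0:ℝ), (c t * (N * B t)) ^ (2:ℝ)) ^ ((1:ℝ)/2)
        + (∫⁻ t in Set.Ioi (0:ℝ), (c t * A t) ^ (2:ℝ)) ^ ((1:ℝ)/2) := by
        exact ENNReal.lintegral_Lp_add_le
          ((hcm.mul (hBm.const_mul N)).aemeasurable)
          ((hcm.mul hAm).aemeasurable) (by norm_num)
    _ = N * (∫⁻ t in Set.Ioi (0:ℝ), w t * B t ^ 2) ^ ((1:ℝ)/2)
        + (∫⁻ t in Set.Ioi (0:ℝ), w t * A t ^ 2) ^ ((1:ℝ)/2) := by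
        congr 1
        · have : ∀ t, (c t * (N * B t)) ^ (2:ℝ) = N ^ (2:ℝ) * (w t * B t ^ 2) := by
            intro t
            rw [ENNReal.mul_rpow_of_nonneg _ _ (by norm_num : (0:ℝ) ≤ 2),
              ENNReal.mul_rpow_of_nonneg _ _ (by norm_num : (0:ℝ) ≤ 2), hc2, hr2]
            ring
          rw [lintegral_congr this,
            lintegral_const_mul' _ _ (by simp [hN] : N ^ (2:ℝ) ≠ ⊤),
            ENNReal.mul_rpow_of_nonneg _ _ (by norm_num : (0:ℝ) ≤ 1/2),
            ← ENNReal.rpow_mul]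
          norm_num
        · refine congrArg (· ^ ((1:ℝ)/2)) (lintegral_congr fun t => ?_)
          rw [ENNReal.mul_rpow_of_nonneg _ _ (by norm_num : (0:ℝ) ≤ 2), hc2, hr2]
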